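/- Let φ₁ : ℝᵖ → ℝ be differentiable with L-Lipschitz continuous gradient, φ₂ : ℝᵖ → ℝ ∪ {∞} proper lsc, and 0 < γ < 1/L. For s ∈ ℝᵖ let u = prox_{γφ₁}(s) and v ∈ prox_{γφ₂}(2u−s), and define φ^γ_DR(s) = φ₁(u) + φ₂(v) + (1/γ)⟨s−u, v−u⟩ + (1/(2γ))‖v−u‖². Then φ(v) + ((1−γL)/(2γ))‖v−u‖² ≤ φ^γ_DR(s) ≤ φ(u), where φ = φ₁ + φ₂. -/

import Mathlib

open scoped RealInnerProductSpace
open Filter Topology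

/-- The convex (Fenchel) conjugate of an extended-real-valued function. -/
noncomputable def eConj {n : ℕ} (h : EuclideanSpace ℝ (Fin n) → EReal)
    (y : EuclideanSpace ℝ (Fin n)) : EReal :=
  ⨆ x, ((⟪y, x⟫ : ℝ) : EReal) - h x

/-- `h` is proper: nowhere `⊥` and not identically `⊤`. -/
def ProperFn {n : ℕ} (h : EuclideanSpace ℝ (Fin n) → EReal) : Prop :=
  (∃ x, h x ≠ ⊤) ∧ ∀ x, h x ≠ ⊥

/-- Convexity for extended-real-valued functions. -/
def EConvexOn {n : ℕ} (h : EuclideanSpace ℝ (Fin n) → EReal) : Prop :=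
  ∀ x y : EuclideanSpace ℝ (Fin n), ∀ a b : ℝ, 0 ≤ a → 0 ≤ b → a + b = 1 →
    h (a • x + b • y) ≤ (a : EReal) * h x + (b : EReal) * h y

/-- `u ∈ prox_{γ h}(x)` for an extended-real-valued `h`. -/
def IsProx {n : ℕ} (h : EuclideanSpace ℝ (Fin n) → EReal) (γ : ℝ)
    (x u : EuclideanSpace ℝ (Fin n)) : Prop :=
  ∀ w, h u + ((‖u - x‖ ^ 2 / (2 * γ) : ℝ) : EReal) ≤ h w + ((‖w - x‖ ^ 2 / (2 * γ) : ℝ) : EReal)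

/-- `u = prox_{γ h}(x)` for a real-valued `h`. -/
def IsProxR {n : ℕ} (h : EuclideanSpace ℝ (Fin n) → ℝ) (γ : ℝ)
    (x u : EuclideanSpace ℝ (Fin n)) : Prop :=
  ∀ w, h u + ‖u - x‖ ^ 2 / (2 * γ) ≤ h w + ‖w - x‖ ^ 2 / (2 * γ)

/-- The Moreau envelope `h^γ`. -/
noncomputable def moreauEnv {n : ℕ} (h : EuclideanSpace ℝ (Fin n) → EReal) (γ : ℝ)
    (x : EuclideanSpace ℝ (Fin n)) : EReal :=
  ⨅ w, h w + ((‖w - x‖ ^ 2 / (2 * γ) : ℝ) : EReal)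

/-- The Douglas–Rachford envelope value at `s`, given the prox points `u, v`. -/
noncomputable def dre {n : ℕ} (φ₁ φ₂ : EuclideanSpace ℝ (Fin n) → EReal) (γ : ℝ)
    (s u v : EuclideanSpace ℝ (Fin n)) : EReal :=
  φ₁ u + φ₂ v + (((1 / γ) * ⟪s - u, v - u⟫ + ‖v - u‖ ^ 2 / (2 * γ) : ℝ) : EReal)

/-- `v` belongs to the regular (Fréchet) subdifferential of `h` at `x̄`. -/
def RegSubdiffAt {n : ℕ} (h : EuclideanSpace ℝ (Fin n) → EReal)
    (xbar v : EuclideanSpace ℝ (Fin n)) : Prop :=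
  ∀ ε : ℝ, 0 < ε → ∀ᶠ x in nhds xbar,
    h xbar + ((⟪v, x - xbar⟫ - ε * ‖x - xbar‖ : ℝ) : EReal) ≤ h x

/-- `μ`-strong convexity for extended-real-valued functions. -/
def EStrongConvexOn {n : ℕ} (μ : ℝ) (h : EuclideanSpace ℝ (Fin n) → EReal) : Prop :=
  EConvexOn (fun x => h x - ((μ / 2 * ‖x‖ ^ 2 : ℝ) : EReal))

/-- Descent lemma for functions with Lipschitz gradient. -/
lemma descent_lemma {n : ℕ} (φ₁ : EuclideanSpace ℝ (Fin n) → ℝ)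
    (f' : EuclideanSpace ℝ (Fin n) → EuclideanSpace ℝ (Fin n)) (L : ℝ) (hL : 0 < L)
    (hdiff : ∀ x, HasGradientAt φ₁ (f' x) x)
    (hlip : ∀ x y, ‖f' x - f' y‖ ≤ L * ‖x - y‖)
    (x y : EuclideanSpace ℝ (Fin n)) :
    φ₁ y ≤ φ₁ x + ⟪f' x, y - x⟫ + L / 2 * ‖y - x‖ ^ 2 := by
  set d := y - x with hd
  set h : ℝ → ℝ := fun t => φ₁ (x + t • d) - t * ⟪f' x, d⟫ - L / 2 * t ^ 2 * ‖d‖ ^ 2 with hh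
  have hderiv : ∀ t : ℝ, HasDerivAt h
      (⟪f' (x + t • d), d⟫ - ⟪f' x, d⟫ - L * t * ‖d‖ ^ 2) t := by
    intro t
    have hline : HasDerivAt (fun t : ℝ => x + t • d) d t := by
      simpa using ((hasDerivAt_id t).smul_const d).const_add x
    have h1 : HasDerivAt (fun t : ℝ => φ₁ (x + t • d)) ⟪f' (x + t • d), d⟫ t := by
      have := (hdiff (x + t • d)).hasFDerivAt.comp_hasDerivAt t hline
      simpa [Function.comp_def] using this
    have h2 : HasDerivAt (fun t : ℝ => t * ⟪f' x, d⟫) ⟪f' x, d⟫ t := by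
      simpa using (hasDerivAt_id t).mul_const (⟪f' x, d⟫ : ℝ)
    have h3 : HasDerivAt (fun t : ℝ => L / 2 * t ^ 2 * ‖d‖ ^ 2)
        (L * t * ‖d‖ ^ 2) t := by
      have := ((hasDerivAt_pow 2 t).const_mul (L / 2)).mul_const (‖d‖ ^ 2)
      refine this.congr_deriv ?_
      push_cast; ring
    exact (h1.sub h2).sub h3
  have hmono : AntitoneOn h (Set.Icc (0 : ℝ) 1) := by
    apply antitoneOn_of_deriv_nonpos (convex_Icc 0 1)
    · exact fun t _ => (hderiv t).continuousAt.continuousWithinAt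
    · exact fun t _ => (hderiv t).differentiableAt.differentiableWithinAt
    · intro t ht
      rw [interior_Icc] at ht
      rw [(hderiv t).deriv]
      have A : ⟪f' (x + t • d), d⟫ - ⟪f' x, d⟫ ≤ ‖f' (x + t • d) - f' x‖ * ‖d‖ := by
        rw [← inner_sub_left]; exact real_inner_le_norm _ _
      have hl : ‖f' (x + t • d) - f' x‖ ≤ L * ‖t • d‖ := by
        simpa using hlip (x + t • d) x
      have hts : ‖t • d‖ = t * ‖d‖ := by
        rw [norm_smul, Real.norm_eq_abs, abs_of_pos ht.1]
      rw [hts] at hl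
      nlinarith [norm_nonneg d, norm_nonneg (f' (x + t • d) - f' x)]
  have key : h 1 ≤ h 0 :=
    hmono (Set.mem_Icc.2 ⟨le_refl 0, zero_le_one⟩)
      (Set.mem_Icc.2 ⟨zero_le_one, le_refl 1⟩) zero_le_one
  have e1 : x + (1 : ℝ) • d = y := by rw [one_smul, hd]; abel
  have e0 : x + (0 : ℝ) • d = x := by rw [zero_smul, add_zero]
  simp only [hh, e1, e0, one_pow, mul_one, one_mul] at key
  simp only [zero_mul, mul_zero, sub_zero] at key
  linarith [key]

/-- First-order optimality for the prox of a differentiable function. -/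
lemma prox_grad_eq {n : ℕ} (φ₁ : EuclideanSpace ℝ (Fin n) → ℝ)
    (f' : EuclideanSpace ℝ (Fin n) → EuclideanSpace ℝ (Fin n))
    (hdiff : ∀ x, HasGradientAt φ₁ (f' x) x) (γ : ℝ) (hγ0 : 0 < γ)
    (s u : EuclideanSpace ℝ (Fin n)) (hu : IsProxR φ₁ γ s u) :
    γ • f' u = s - u := by
  have hmin : IsLocalMin (fun w => φ₁ w + ‖w - s‖ ^ 2 / (2 * γ)) u :=
    Filter.Eventually.of_forall hu
  have h2 : HasFDerivAt (fun w : EuclideanSpace ℝ (Fin n) => ‖w - s‖ ^ 2)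
      (2 • innerSL ℝ (u - s)) u := by
    have := ((hasFDerivAt_id u).sub_const s).norm_sq
    simpa using this
  have h3 : HasFDerivAt (fun w : EuclideanSpace ℝ (Fin n) => ‖w - s‖ ^ 2 / (2 * γ))
      ((2 * γ)⁻¹ • (2 • innerSL ℝ (u - s))) u := by
    have := h2.const_smul ((2 * γ)⁻¹)
    simpa [div_eq_inv_mul, smul_eq_mul, Pi.smul_def] using this
  have hF : HasFDerivAt (fun w => φ₁ w + ‖w - s‖ ^ 2 / (2 * γ))
      ((InnerProductSpace.toDual ℝ (EuclideanSpace ℝ (Fin n)) (f' u) : _ →L[ℝ] ℝ)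
        + (2 * γ)⁻¹ • (2 • innerSL ℝ (u - s))) u :=
    (hdiff u).hasFDerivAt.add h3
  have h0 : (InnerProductSpace.toDual ℝ (EuclideanSpace ℝ (Fin n)) (f' u) : _ →L[ℝ] ℝ)
      + (2 * γ)⁻¹ • (2 • innerSL ℝ (u - s)) = 0 := by
    rw [← hF.fderiv]; exact hmin.fderiv_eq_zero
  set z : EuclideanSpace ℝ (Fin n) := f' u + γ⁻¹ • (u - s) with hz
  have hzz : z = 0 := by
    have hev := ContinuousLinearMap.ext_iff.1 h0 z
    simp only [ContinuousLinearMap.add_apply, ContinuousLinearMap.smul_apply,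
      ContinuousLinearMap.zero_apply, InnerProductSpace.toDual_apply_apply, innerSL_apply_apply,
      smul_eq_mul, two_smul, ContinuousLinearMap.add_apply] at hev
    have hinner : (⟪z, z⟫ : ℝ) = 0 := by
      rw [hz, inner_add_left, real_inner_smul_left]
      have h2γ : (2 * γ)⁻¹ * (⟪u - s, z⟫ + ⟪u - s, z⟫) = γ⁻¹ * ⟪u - s, z⟫ := by
        field_simp; ring
      linarith [hev, h2γ]
    exact inner_self_eq_zero.1 hinner
  have : f' u = γ⁻¹ • (s - u) := by
    have := sub_eq_zero.2 hzz.symm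
    have h' : f' u = -(γ⁻¹ • (u - s)) := by
      have := eq_neg_of_add_eq_zero_left hzz
      exact this
    rw [h', ← smul_neg, neg_sub]
  rw [this, smul_smul, mul_inv_cancel₀ (ne_of_gt hγ0), one_smul]

/-- Sandwich inequality for the Douglas–Rachford envelope:
`φ(v) + ((1−γL)/(2γ))‖v−u‖² ≤ φ^γ_DR(s) ≤ φ(u)` where `φ = φ₁ + φ₂`. -/
theorem dre_sandwich {n : ℕ} (φ₁ : EuclideanSpace ℝ (Fin n) → ℝ)
    (f' : EuclideanSpace ℝ (Fin n) → EuclideanSpace ℝ (Fin n)) (L : ℝ) (hL : 0 < L)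
    (hdiff : ∀ x, HasGradientAt φ₁ (f' x) x)
    (hlip : ∀ x y, ‖f' x - f' y‖ ≤ L * ‖x - y‖)
    (φ₂ : EuclideanSpace ℝ (Fin n) → EReal)
    (h2p : ProperFn φ₂) (h2l : LowerSemicontinuous φ₂)
    (γ : ℝ) (hγ0 : 0 < γ) (hγ : γ < 1 / L)
    (s u v : EuclideanSpace ℝ (Fin n))
    (hu : IsProxR φ₁ γ s u) (hv : IsProx φ₂ γ ((2 : ℝ) • u - s) v) :
    ((φ₁ v : ℝ) : EReal) + φ₂ v + (((1 - γ * L) / (2 * γ) * ‖v - u‖ ^ 2 : ℝ) : EReal)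
        ≤ dre (fun x => ((φ₁ x : ℝ) : EReal)) φ₂ γ s u v ∧
      dre (fun x => ((φ₁ x : ℝ) : EReal)) φ₂ γ s u v ≤ ((φ₁ u : ℝ) : EReal) + φ₂ u := by
  have hγne : γ ≠ 0 := ne_of_gt hγ0
  have hgrad : γ • f' u = s - u := prox_grad_eq φ₁ f' hdiff γ hγ0 s u hu
  have hip : (⟪s - u, v - u⟫ : ℝ) = γ * ⟪f' u, v - u⟫ := by
    rw [← hgrad, real_inner_smul_left]
  have haux : ∀ (p q : ℝ) (z : EReal),
      (p : EReal) + z + (q : EReal) = z + (((p + q : ℝ)) : EReal) := by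
    intro p q z
    rw [EReal.coe_add, add_comm (p : EReal) z, add_assoc]
  constructor
  · -- lower bound
    have hdesc := descent_lemma φ₁ f' L hL hdiff hlip u v
    have hreal : φ₁ v + (1 - γ * L) / (2 * γ) * ‖v - u‖ ^ 2
        ≤ φ₁ u + ((1 / γ) * ⟪s - u, v - u⟫ + ‖v - u‖ ^ 2 / (2 * γ)) := by
      rw [hip]
      have e1 : (1 / γ) * (γ * ⟪f' u, v - u⟫) = ⟪f' u, v - u⟫ := by
        field_simp
      rw [e1]
      have e2 : (1 - γ * L) / (2 * γ) * ‖v - u‖ ^ 2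
          = ‖v - u‖ ^ 2 / (2 * γ) - L / 2 * ‖v - u‖ ^ 2 := by
        field_simp
      rw [e2]
      linarith [hdesc]
    rw [dre, haux (φ₁ v) _ (φ₂ v), haux (φ₁ u) _ (φ₂ v)]
    exact add_le_add_right (EReal.coe_le_coe_iff.2 hreal) _
  · -- upper bound
    have hvu := hv u
    have hA : ‖v - ((2 : ℝ) • u - s)‖ ^ 2 / (2 * γ)
        = ((1 / γ) * ⟪s - u, v - u⟫ + ‖v - u‖ ^ 2 / (2 * γ))
          + ‖u - ((2 : ℝ) • u - s)‖ ^ 2 / (2 * γ) := by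
      have e1 : v - ((2 : ℝ) • u - s) = (v - u) + (s - u) := by
        rw [two_smul]; abel
      have e2 : u - ((2 : ℝ) • u - s) = s - u := by
        rw [two_smul]; abel
      rw [e1, e2, norm_add_sq_real, real_inner_comm]
      field_simp
      ring
    rw [hA] at hvu
    have hcancel : φ₂ v + (((1 / γ) * ⟪s - u, v - u⟫ + ‖v - u‖ ^ 2 / (2 * γ) : ℝ) : EReal)
        ≤ φ₂ u := by
      have h' : φ₂ v + (((1 / γ) * ⟪s - u, v - u⟫ + ‖v - u‖ ^ 2 / (2 * γ) : ℝ) : EReal)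
            + ((‖u - ((2 : ℝ) • u - s)‖ ^ 2 / (2 * γ) : ℝ) : EReal)
          ≤ φ₂ u + ((‖u - ((2 : ℝ) • u - s)‖ ^ 2 / (2 * γ) : ℝ) : EReal) := by
        rw [add_assoc, ← EReal.coe_add]
        exact hvu
      exact (EReal.addLECancellable_coe _).add_le_add_iff_right.1 h'
    rw [dre, add_assoc]
    exact add_le_add_right hcancel _
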